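/- Let n ≥ 1. The number of integer sequences (c_1,…,c_n) with 0 ≤ c_i ≤ n − i for all i that satisfy the condition 'for every pair of indices i < j with c_i ≠ 0, c_j ≠ 0, and c_k = 0 for all k with i < k < j, one has c_i − c_j ≤ j − i − 1' equals the n-th Catalan number (1/(n+1))·C(2n, n). -/

import Mathlib

open Finset List DyckStep

namespace Stmt12

variable {n : ℕ}

def Cond (n : ℕ) (c : Fin n → ℕ) : Prop :=
  (∀ i : Fin n, c i ≤ n - (i.val + 1)) ∧
  ∀ i j : Fin n, i < j → c i ≠ 0 → c j ≠ 0 →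
    (∀ k : Fin n, i < k → k < j → c k = 0) →
    c i - c j ≤ j.val - i.val - 1

def PCond (n : ℕ) (ST : Finset (Fin n) × Finset (Fin n)) : Prop :=
  ST.1.card = ST.2.card ∧
  ∀ t : ℕ, (ST.2.filter (fun s => s.val ≤ t)).card ≤ (ST.1.filter (fun s => s.val < t)).card

lemma chain {c : Fin n → ℕ} (hc : Cond n c) :
    ∀ d : ℕ, ∀ i j : Fin n, j.val - i.val ≤ d → i < j → c i ≠ 0 → c j ≠ 0 →
      c i + i.val < c j + j.val := by
  intro d
  induction d with
  | zero => intro i j hd hij _ _; exact absurd hij (by omega)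
  | succ d ih =>
    intro i j hd hij hi hj
    by_cases hmid : ∃ k : Fin n, i < k ∧ k < j ∧ c k ≠ 0
    · obtain ⟨k, h1, h2, h3⟩ := hmid
      have e1 := ih i k (by omega) h1 hi h3
      have e2 := ih k j (by omega) h2 h3 hj
      omega
    · push_neg at hmid
      have := hc.2 i j hij hi hj hmid
      have hv : i.val < j.val := hij
      omega

lemma chain' {c : Fin n → ℕ} (hc : Cond n c) {i j : Fin n} (hij : i < j)
    (hi : c i ≠ 0) (hj : c j ≠ 0) : c i + i.val < c j + j.val :=
  chain hc (j.val - i.val) i j le_rfl hij hi hj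

lemma a_lt {c : Fin n → ℕ} (hc : ∀ i : Fin n, c i ≤ n - (i.val + 1)) (i : Fin n) : c i + i.val < n := by
  have := hc i; have := i.isLt; omega


/-- support of c -/
def sOf (c : Fin n → ℕ) : Finset (Fin n) := univ.filter (fun i => c i ≠ 0)

/-- the map i ↦ c i + i -/
def aOf (c : Fin n → ℕ) (hc : Cond n c) : Fin n → Fin n :=
  fun i => ⟨c i + i.val, a_lt hc.1 i⟩

def tOf (c : Fin n → ℕ) (hc : Cond n c) : Finset (Fin n) := (sOf c).image (aOf c hc)

lemma aOf_injOn {c : Fin n → ℕ} (hc : Cond n c) :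
    Set.InjOn (aOf c hc) (sOf c) := by
  intro i hi j hj hij
  simp only [sOf, coe_filter, Set.mem_setOf_eq, mem_coe, mem_filter] at hi hj
  by_contra hne
  rcases lt_or_gt_of_ne hne with h | h
  · have := chain' hc h hi.2 hj.2
    simp only [aOf, Fin.mk.injEq] at hij; omega
  · have := chain' hc h hj.2 hi.2
    simp only [aOf, Fin.mk.injEq] at hij; omega

lemma pcond_of_cond {c : Fin n → ℕ} (hc : Cond n c) : PCond n (sOf c, tOf c hc) := by
  constructor
  · exact (Finset.card_image_of_injOn (aOf_injOn hc)).symm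
  · intro t
    have himg : (tOf c hc).filter (fun s => s.val ≤ t)
        = ((sOf c).filter (fun i => (aOf c hc i).val ≤ t)).image (aOf c hc) := by
      rw [tOf, Finset.filter_image]
    rw [himg, Finset.card_image_of_injOn ((aOf_injOn hc).mono (by
      intro x hx; simp only [coe_filter, Set.mem_setOf_eq] at hx
      exact (Finset.mem_coe.2 hx.1)))]
    apply Finset.card_le_card
    intro i hi
    rw [Finset.mem_filter] at hi ⊢
    refine ⟨hi.1, ?_⟩
    have hne : c i ≠ 0 := by
      have h1 := hi.1; rw [sOf, Finset.mem_filter] at h1; exact h1.2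
    have ha : (aOf c hc i).val = c i + i.val := rfl
    have := hi.2
    omega

section Inv
variable {S T : Finset (Fin n)} (hcard : S.card = T.card)
    (hpre : ∀ t : ℕ, (T.filter (fun s => s.val ≤ t)).card ≤ (S.filter (fun s => s.val < t)).card)

-- the sorted enumerations
noncomputable def eS (_ : S.card = T.card) : Fin S.card ≃o {x // x ∈ S} := S.orderIsoOfFin rfl
noncomputable def eT (hcard : S.card = T.card) : Fin S.card ≃o {x // x ∈ T} :=
  T.orderIsoOfFin hcard.symm

include hpre in
lemma dom (j : Fin S.card) : ((eS hcard j : {x // x ∈ S}) : Fin n).val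
    < ((eT hcard j : {x // x ∈ T}) : Fin n).val := by
  by_contra hle
  push_neg at hle
  set t : ℕ := ((eT hcard j : {x // x ∈ T}) : Fin n).val with ht
  -- claim 1 : j+1 ≤ |T ∩ ≤ t|
  have claim1 : j.val + 1 ≤ (T.filter (fun s => s.val ≤ t)).card := by
    have : (Finset.Iic j).image (fun m => ((eT hcard m : {x // x ∈ T}) : Fin n))
        ⊆ T.filter (fun s => s.val ≤ t) := by
      intro x hx
      simp only [Finset.mem_image, Finset.mem_Iic] at hx
      obtain ⟨m, hm, rfl⟩ := hx
      rw [Finset.mem_filter]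
      refine ⟨(eT hcard m).2, ?_⟩
      have : (eT hcard m : {x // x ∈ T}) ≤ (eT hcard j : {x // x ∈ T}) :=
        (eT hcard).monotone hm
      exact this
    have hinj : Set.InjOn (fun m => ((eT hcard m : {x // x ∈ T}) : Fin n)) (Finset.Iic j) := by
      intro a _ b _ hab
      have : (eT hcard a : {x // x ∈ T}) = eT hcard b := Subtype.ext hab
      exact (eT hcard).injective this
    calc j.val + 1 = (Finset.Iic j).card := (Fin.card_Iic j).symm
      _ = ((Finset.Iic j).image _).card := (Finset.card_image_of_injOn hinj).symm
      _ ≤ _ := Finset.card_le_card this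
  -- claim 2 : |S ∩ < t| ≤ j
  have claim2 : (S.filter (fun s => s.val < t)).card ≤ j.val := by
    have hsub : S.filter (fun s => s.val < t)
        ⊆ (Finset.Iio j).image (fun m => ((eS hcard m : {x // x ∈ S}) : Fin n)) := by
      intro x hx
      rw [Finset.mem_filter] at hx
      obtain ⟨hxS, hxt⟩ := hx
      set m := (eS hcard).symm ⟨x, hxS⟩ with hm
      have hxm : ((eS hcard m : {x // x ∈ S}) : Fin n) = x := by
        rw [hm, OrderIso.apply_symm_apply]
      have hmj : m < j := by
        by_contra hmj
        push_neg at hmj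
        have : (eS hcard j : {x // x ∈ S}) ≤ (eS hcard m : {x // x ∈ S}) :=
          (eS hcard).monotone hmj
        have h2 : ((eS hcard j : {x // x ∈ S}) : Fin n).val ≤ x.val := by
          rw [← hxm]; exact this
        omega
      exact Finset.mem_image.2 ⟨m, Finset.mem_Iio.2 hmj, hxm⟩
    calc (S.filter (fun s => s.val < t)).card ≤ _ := Finset.card_le_card hsub
      _ ≤ (Finset.Iio j).card := Finset.card_image_le
      _ = j.val := Fin.card_Iio j
  have := hpre t
  omega

noncomputable def cOf (hcard : S.card = T.card) : Fin n → ℕ := fun i =>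
  if h : i ∈ S then ((eT hcard ((eS hcard).symm ⟨i, h⟩) : {x // x ∈ T}) : Fin n).val - i.val
  else 0

lemma cOf_eq_zero (hcard : S.card = T.card) {i : Fin n} (h : i ∉ S) : cOf hcard i = 0 :=
  dif_neg h

include hpre in
lemma cOf_add {i : Fin n} (h : i ∈ S) :
    cOf hcard i + i.val
      = ((eT hcard ((eS hcard).symm ⟨i, h⟩) : {x // x ∈ T}) : Fin n).val := by
  have hd := dom hcard hpre ((eS hcard).symm ⟨i, h⟩)
  rw [OrderIso.apply_symm_apply] at hd
  rw [cOf, dif_pos h]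
  simp only at hd
  omega

include hpre in
lemma cOf_pos {i : Fin n} (h : i ∈ S) : cOf hcard i ≠ 0 := by
  have hd := dom hcard hpre ((eS hcard).symm ⟨i, h⟩)
  rw [OrderIso.apply_symm_apply] at hd
  rw [cOf, dif_pos h]
  simp only at hd
  omega

end Inv

section Inv2
variable {S T : Finset (Fin n)} (hcard : S.card = T.card)
    (hpre : ∀ t : ℕ, (T.filter (fun s => s.val ≤ t)).card ≤ (S.filter (fun s => s.val < t)).card)

include hpre in
lemma cOf_mem_iff {i : Fin n} : cOf hcard i ≠ 0 ↔ i ∈ S := by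
  constructor
  · intro h; by_contra hi; exact h (cOf_eq_zero hcard hi)
  · exact cOf_pos hcard hpre

include hpre in
lemma cond_cOf : Cond n (cOf hcard) := by
  constructor
  · intro i
    by_cases h : i ∈ S
    · have := cOf_add hcard hpre h
      have hlt : ((eT hcard ((eS hcard).symm ⟨i, h⟩) : {x // x ∈ T}) : Fin n).val < n :=
        Fin.isLt _
      have := i.isLt
      omega
    · rw [cOf_eq_zero hcard h]; omega
  · intro i j hij hi hj _
    have hiS : i ∈ S := (cOf_mem_iff hcard hpre).1 hi
    have hjS : j ∈ S := (cOf_mem_iff hcard hpre).1 hj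
    have hmm : (eS hcard).symm ⟨i, hiS⟩ < (eS hcard).symm ⟨j, hjS⟩ := by
      rw [OrderIso.lt_iff_lt]
      exact hij
    have hTlt : ((eT hcard ((eS hcard).symm ⟨i, hiS⟩) : {x // x ∈ T}) : Fin n)
        < ((eT hcard ((eS hcard).symm ⟨j, hjS⟩) : {x // x ∈ T}) : Fin n) := by
      have := (eT hcard).strictMono hmm
      exact this
    have e1 := cOf_add hcard hpre hiS
    have e2 := cOf_add hcard hpre hjS
    have hv : i.val < j.val := hij
    have hlt : ((eT hcard ((eS hcard).symm ⟨i, hiS⟩) : {x // x ∈ T}) : Fin n).val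
        < ((eT hcard ((eS hcard).symm ⟨j, hjS⟩) : {x // x ∈ T}) : Fin n).val := hTlt
    omega

/-- round trip: starting from c -/
lemma cOf_sOf_tOf {c : Fin n → ℕ} (hc : Cond n c) :
    cOf (pcond_of_cond hc).1 = c := by
  have hcard : (sOf c).card = (tOf c hc).card := (pcond_of_cond hc).1
  have hpre := (pcond_of_cond hc).2
  funext i
  by_cases h : i ∈ sOf c
  · have e1 := cOf_add hcard hpre h
    have hciS : c i ≠ 0 := by
      have h' := h; simp only [sOf, Finset.mem_filter, Finset.mem_univ, true_and] at h'; exact h'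
    -- f and g agree
    have key : (fun m : Fin (sOf c).card => ((eT hcard m : {x // x ∈ tOf c hc}) : Fin n))
        = (fun m : Fin (sOf c).card => aOf c hc ((eS hcard m : {x // x ∈ sOf c}) : Fin n)) := by
      refine (StrictMono.range_inj ?_ ?_).1 ?_
      · intro a b hab
        exact (eT hcard).strictMono hab
      · intro a b hab
        have h1 : ((eS hcard a : {x // x ∈ sOf c}) : Fin n) < ((eS hcard b : {x // x ∈ sOf c}) : Fin n) :=
          (eS hcard).strictMono hab
        have ha : ((eS hcard a : {x // x ∈ sOf c}) : Fin n) ∈ sOf c := (eS hcard a).2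
        have hb : ((eS hcard b : {x // x ∈ sOf c}) : Fin n) ∈ sOf c := (eS hcard b).2
        simp only [sOf, Finset.mem_filter, Finset.mem_univ, true_and] at ha hb
        have := chain' hc h1 ha hb
        simp only [aOf]
        exact Fin.mk_lt_mk.2 this
      · ext x
        constructor
        · rintro ⟨m, rfl⟩
          have : ((eT hcard m : {x // x ∈ tOf c hc}) : Fin n) ∈ tOf c hc := (eT hcard m).2
          rw [Set.mem_range]
          -- x ∈ T = image aOf S
          simp only [tOf, Finset.mem_image] at this
          obtain ⟨i', hi', hx⟩ := this
          exact ⟨(eS hcard).symm ⟨i', hi'⟩, by rw [OrderIso.apply_symm_apply]; exact hx⟩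
        · rintro ⟨m, rfl⟩
          have hmem : aOf c hc ((eS hcard m : {x // x ∈ sOf c}) : Fin n) ∈ tOf c hc := by
            simp only [tOf, Finset.mem_image]
            exact ⟨_, (eS hcard m).2, rfl⟩
          exact ⟨(eT hcard).symm ⟨_, hmem⟩, by simp only [OrderIso.apply_symm_apply]⟩
    have e2 := congrFun key ((eS hcard).symm ⟨i, h⟩)
    rw [OrderIso.apply_symm_apply] at e2
    have e3 : (aOf c hc i).val = c i + i.val := rfl
    rw [e2] at e1
    simp only [e3] at e1
    omega
  · rw [cOf_eq_zero hcard h]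
    have h' := h; simp only [sOf, Finset.mem_filter, Finset.mem_univ, true_and] at h'
    push_neg at h'
    exact h'.symm

include hpre in
/-- round trip: starting from (S,T) -/
lemma sOf_cOf : sOf (cOf hcard) = S := by
  ext i
  simp only [sOf, Finset.mem_filter, Finset.mem_univ, true_and]
  exact cOf_mem_iff hcard hpre

include hpre in
lemma tOf_cOf : tOf (cOf hcard) (cond_cOf hcard hpre) = T := by
  apply Finset.eq_of_subset_of_card_le
  · intro x hx
    simp only [tOf, Finset.mem_image] at hx
    obtain ⟨i, hi, rfl⟩ := hx
    have hiS : i ∈ S := by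
      simp only [sOf, Finset.mem_filter, Finset.mem_univ, true_and] at hi
      exact (cOf_mem_iff hcard hpre).1 hi
    have e1 := cOf_add hcard hpre hiS
    have : aOf (cOf hcard) (cond_cOf hcard hpre) i
        = ((eT hcard ((eS hcard).symm ⟨i, hiS⟩) : {x // x ∈ T}) : Fin n) := by
      apply Fin.ext
      simp only [aOf]
      omega
    rw [this]
    exact ((eT hcard) ((eS hcard).symm ⟨i, hiS⟩)).2
  · rw [show tOf (cOf hcard) (cond_cOf hcard hpre)
        = (sOf (cOf hcard)).image (aOf (cOf hcard) (cond_cOf hcard hpre)) from rfl]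
    rw [Finset.card_image_of_injOn (aOf_injOn _)]
    rw [sOf_cOf hcard hpre]
    omega

end Inv2

noncomputable def equiv1 (n : ℕ) : {c : Fin n → ℕ // Cond n c}
    ≃ {ST : Finset (Fin n) × Finset (Fin n) // PCond n ST} where
  toFun := fun c => ⟨(sOf c.1, tOf c.1 c.2), pcond_of_cond c.2⟩
  invFun := fun ST => ⟨cOf ST.2.1, cond_cOf ST.2.1 ST.2.2⟩
  left_inv := fun c => Subtype.ext (cOf_sOf_tOf c.2)
  right_inv := fun ST => Subtype.ext (by
    obtain ⟨⟨S, T⟩, hST⟩ := ST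
    have h1 := sOf_cOf hST.1 hST.2
    have h2 := tOf_cOf hST.1 hST.2
    simp only at h1 h2 ⊢
    exact Prod.ext h1 h2)


-- generic filter-card helpers
lemma filter_lt_succ_card (X : Finset (Fin n)) {t : ℕ} (ht : t < n) :
    (X.filter (fun s => s.val < t + 1)).card
      = (X.filter (fun s => s.val < t)).card + (if (⟨t, ht⟩ : Fin n) ∈ X then 1 else 0) := by
  have hsplit : X.filter (fun s => s.val < t + 1)
      = X.filter (fun s => s.val < t) ∪ X.filter (fun s => s.val = t) := by
    rw [← Finset.filter_or]
    apply Finset.filter_congr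
    intro x _
    constructor
    · intro h; omega
    · intro h; omega
  have heq : X.filter (fun s => s.val = t) = if (⟨t, ht⟩ : Fin n) ∈ X then {⟨t, ht⟩} else ∅ := by
    split_ifs with h
    · ext x
      simp only [Finset.mem_filter, Finset.mem_singleton]
      constructor
      · intro ⟨_, hx⟩; exact Fin.ext hx
      · intro hx; subst hx; exact ⟨h, rfl⟩
    · ext x
      simp only [Finset.mem_filter, Finset.notMem_empty, iff_false]
      intro ⟨hx1, hx2⟩
      exact h (by have : x = ⟨t, ht⟩ := Fin.ext hx2; rwa [this] at hx1)
  rw [hsplit, Finset.card_union_of_disjoint, heq]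
  · split_ifs <;> simp
  · rw [Finset.disjoint_filter]
    intro x _ h1 h2
    omega

lemma filter_le_eq_filter_lt_succ (X : Finset (Fin n)) (t : ℕ) :
    X.filter (fun s => s.val ≤ t) = X.filter (fun s => s.val < t + 1) := by
  apply Finset.filter_congr; intro x _; constructor <;> (intro h; omega)

lemma filter_lt_card_le (X : Finset (Fin n)) (t : ℕ) :
    (X.filter (fun s => s.val < t)).card ≤ t := by
  calc (X.filter (fun s => s.val < t)).card
      ≤ (Finset.range t).card := by
        apply Finset.card_le_card_of_injOn (fun s => s.val)
        · intro x hx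
          rw [Finset.mem_coe, Finset.mem_filter] at hx
          exact Finset.mem_range.2 hx.2
        · intro a _ b _ hab; exact Fin.ext hab
    _ = t := Finset.card_range t

lemma filter_lt_eq_self (X : Finset (Fin n)) {t : ℕ} (ht : n ≤ t) :
    X.filter (fun s => s.val < t) = X := by
  apply Finset.filter_true_of_mem
  intro x _
  exact lt_of_lt_of_le x.isLt ht

-- S and T extracted from a word
def sW (w : List DyckStep) (hw : w.length = 2 * n) : Finset (Fin n) :=
  univ.filter (fun i : Fin n => w.get ⟨2 * i.val + 1, by have := i.isLt; omega⟩ = U)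

def tW (w : List DyckStep) (hw : w.length = 2 * n) : Finset (Fin n) :=
  univ.filter (fun i : Fin n => w.get ⟨2 * i.val, by have := i.isLt; omega⟩ = D)

lemma take_two_step (w : List DyckStep) (hw : w.length = 2 * n) {t : ℕ} (ht : t < n) :
    w.take (2 * (t + 1)) = w.take (2 * t)
      ++ [w.get ⟨2 * t, by omega⟩, w.get ⟨2 * t + 1, by omega⟩] := by
  have h1 : 2 * (t + 1) = (2 * t + 1) + 1 := by ring
  rw [h1, List.take_succ, List.take_succ,
    List.getElem?_eq_getElem (by omega), List.getElem?_eq_getElem (by omega)]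
  simp only [Option.toList_some, List.append_assoc, List.singleton_append, List.get_eq_getElem]

lemma counts_take (w : List DyckStep) (hw : w.length = 2 * n) :
    ∀ t : ℕ, t ≤ n →
      (w.take (2 * t)).count D
          = ((tW w hw).filter (fun s => s.val < t)).card
            + (t - ((sW w hw).filter (fun s => s.val < t)).card) ∧
      (w.take (2 * t)).count U
          = ((sW w hw).filter (fun s => s.val < t)).card
            + (t - ((tW w hw).filter (fun s => s.val < t)).card) := by
  intro t
  induction t with
  | zero => intro _; simp
  | succ t ih =>
    intro ht
    obtain ⟨ihD, ihU⟩ := ih (by omega)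
    have htn : t < n := by omega
    rw [take_two_step w hw htn]
    have hS := filter_lt_succ_card (sW w hw) htn
    have hT := filter_lt_succ_card (tW w hw) htn
    have hSmem : ((⟨t, htn⟩ : Fin n) ∈ sW w hw) ↔ w.get ⟨2 * t + 1, by omega⟩ = U := by
      simp [sW]
    have hTmem : ((⟨t, htn⟩ : Fin n) ∈ tW w hw) ↔ w.get ⟨2 * t, by omega⟩ = D := by
      simp [tW]
    have hSb := filter_lt_card_le (sW w hw) t
    have hTb := filter_lt_card_le (tW w hw) t
    by_cases hTm : (⟨t, htn⟩ : Fin n) ∈ tW w hw <;>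
      by_cases hSm : (⟨t, htn⟩ : Fin n) ∈ sW w hw
    · have h0 : w.get ⟨2 * t, by omega⟩ = D := hTmem.1 hTm
      have h1 : w.get ⟨2 * t + 1, by omega⟩ = U := hSmem.1 hSm
      constructor <;>
        · rw [List.count_append, hS, hT, if_pos hTm, if_pos hSm]
          simp only [ihD, ihU, h0, h1, List.count_cons, List.count_nil]
          simp
          all_goals omega
    · have h0 : w.get ⟨2 * t, by omega⟩ = D := hTmem.1 hTm
      have h1 : w.get ⟨2 * t + 1, by omega⟩ = D :=
        (DyckStep.dichotomy _).resolve_left (fun h => hSm (hSmem.2 h))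
      constructor <;>
        · rw [List.count_append, hS, hT, if_pos hTm, if_neg hSm]
          simp only [ihD, ihU, h0, h1, List.count_cons, List.count_nil]
          simp
          all_goals omega
    · have h0 : w.get ⟨2 * t, by omega⟩ = U :=
        (DyckStep.dichotomy _).resolve_right (fun h => hTm (hTmem.2 h))
      have h1 : w.get ⟨2 * t + 1, by omega⟩ = U := hSmem.1 hSm
      constructor <;>
        · rw [List.count_append, hS, hT, if_neg hTm, if_pos hSm]
          simp only [ihD, ihU, h0, h1, List.count_cons, List.count_nil]
          simp
          all_goals omega
    · have h0 : w.get ⟨2 * t, by omega⟩ = U :=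
        (DyckStep.dichotomy _).resolve_right (fun h => hTm (hTmem.2 h))
      have h1 : w.get ⟨2 * t + 1, by omega⟩ = D :=
        (DyckStep.dichotomy _).resolve_left (fun h => hSm (hSmem.2 h))
      constructor <;>
        · rw [List.count_append, hS, hT, if_neg hTm, if_neg hSm]
          simp only [ihD, ihU, h0, h1, List.count_cons, List.count_nil]
          simp
          all_goals omega
def gOf (S T : Finset (Fin n)) : Fin (2 * n) → DyckStep := fun m =>
  if m.val % 2 = 0 then
    (if (⟨m.val / 2, by have := m.isLt; omega⟩ : Fin n) ∈ T then D else U)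
  else
    (if (⟨m.val / 2, by have := m.isLt; omega⟩ : Fin n) ∈ S then U else D)

def listOf (S T : Finset (Fin n)) : List DyckStep := List.ofFn (gOf S T)

lemma length_listOf (S T : Finset (Fin n)) : (listOf S T).length = 2 * n :=
  List.length_ofFn

lemma sW_listOf (S T : Finset (Fin n)) : sW (listOf S T) (length_listOf S T) = S := by
  ext i
  have hi := i.isLt
  simp only [sW, Finset.mem_filter, Finset.mem_univ, true_and, List.get_eq_getElem,
    listOf, List.getElem_ofFn, gOf]
  rw [if_neg (show ¬((⟨2 * i.val + 1, by omega⟩ : Fin (2*n)).val % 2 = 0) by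
    show ¬(2 * i.val + 1) % 2 = 0; omega)]
  rw [show (⟨(⟨2 * i.val + 1, by omega⟩ : Fin (2*n)).val / 2, by omega⟩ : Fin n) = i
    from Fin.ext (show (2 * i.val + 1) / 2 = i.val by omega)]
  by_cases h : i ∈ S <;> simp [h]

lemma tW_listOf (S T : Finset (Fin n)) : tW (listOf S T) (length_listOf S T) = T := by
  ext i
  have hi := i.isLt
  simp only [tW, Finset.mem_filter, Finset.mem_univ, true_and, List.get_eq_getElem,
    listOf, List.getElem_ofFn, gOf]
  rw [if_pos (show ((⟨2 * i.val, by omega⟩ : Fin (2*n)).val % 2 = 0) by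
    show (2 * i.val) % 2 = 0; omega)]
  rw [show (⟨(⟨2 * i.val, by omega⟩ : Fin (2*n)).val / 2, by omega⟩ : Fin n) = i
    from Fin.ext (show (2 * i.val) / 2 = i.val by omega)]
  by_cases h : i ∈ T <;> simp [h]

lemma listOf_sW_tW (w : List DyckStep) (hw : w.length = 2 * n) :
    listOf (sW w hw) (tW w hw) = w := by
  apply List.ext_getElem
  · rw [length_listOf, hw]
  · intro m hm1 hm2
    rw [length_listOf] at hm1
    simp only [listOf, List.getElem_ofFn, gOf]
    by_cases hpar : m % 2 = 0
    · rw [if_pos (by simpa using hpar)]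
      have hmem : ((⟨m / 2, by omega⟩ : Fin n) ∈ tW w hw)
          ↔ w.get ⟨2 * (m / 2), by omega⟩ = D := by simp [tW]
      have he : 2 * (m / 2) = m := by omega
      simp only [List.get_eq_getElem] at hmem
      simp_rw [he] at hmem
      rcases (show w[m] = U ∨ w[m] = D from DyckStep.dichotomy _) with h | h
      · rw [if_neg, h]
        rw [hmem, h]; simp
      · rw [if_pos, h]
        rw [hmem]; exact h
    · rw [if_neg (by simpa using hpar)]
      have hmem : ((⟨m / 2, by omega⟩ : Fin n) ∈ sW w hw)
          ↔ w.get ⟨2 * (m / 2) + 1, by omega⟩ = U := by simp [sW]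
      have he : 2 * (m / 2) + 1 = m := by omega
      simp only [List.get_eq_getElem] at hmem
      simp_rw [he] at hmem
      rcases (show w[m] = U ∨ w[m] = D from DyckStep.dichotomy _) with h | h
      · rw [if_pos, h]
        rw [hmem]; exact h
      · rw [if_neg, h]
        rw [hmem, h]; simp

-- weak prefix inequality
lemma hpre' {S T : Finset (Fin n)}
    (hpre : ∀ t : ℕ, (T.filter (fun s => s.val ≤ t)).card ≤ (S.filter (fun s => s.val < t)).card) :
    ∀ t : ℕ, (T.filter (fun s => s.val < t)).card ≤ (S.filter (fun s => s.val < t)).card := by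
  intro t
  cases t with
  | zero => simp
  | succ t =>
    rw [← filter_le_eq_filter_lt_succ]
    calc (T.filter (fun s => s.val ≤ t)).card ≤ (S.filter (fun s => s.val < t)).card := hpre t
      _ ≤ _ := Finset.card_le_card (by
        intro x hx
        rw [Finset.mem_filter] at hx ⊢
        exact ⟨hx.1, by omega⟩)

section ToDyck
variable {S T : Finset (Fin n)} (hP : PCond n (S, T))

include hP in
lemma count_listOf_total : (listOf S T).count U = (listOf S T).count D := by
  have hP1 : S.card = T.card := hP.1
  have hP2 : ∀ t : ℕ, (T.filter (fun s => s.val ≤ t)).card ≤ (S.filter (fun s => s.val < t)).card := hP.2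
  have hc := counts_take (listOf S T) (length_listOf S T) n le_rfl
  rw [sW_listOf, tW_listOf] at hc
  rw [List.take_of_length_le (by rw [length_listOf])] at hc
  rw [filter_lt_eq_self S le_rfl, filter_lt_eq_self T le_rfl] at hc
  have h1 := hP1
  have h2 : S.card ≤ n := by
    rw [← filter_lt_eq_self S (le_refl n)]; exact filter_lt_card_le S n
  have h3 : T.card ≤ n := by
    rw [← filter_lt_eq_self T (le_refl n)]; exact filter_lt_card_le T n
  omega

include hP in
lemma count_listOf_prefix (i : ℕ) :
    ((listOf S T).take i).count D ≤ ((listOf S T).take i).count U := by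
  have hP1 : S.card = T.card := hP.1
  have hP2 : ∀ t : ℕ, (T.filter (fun s => s.val ≤ t)).card ≤ (S.filter (fun s => s.val < t)).card := hP.2
  rcases le_or_gt (2 * n) i with hi | hi
  · rw [List.take_of_length_le (by rw [length_listOf]; omega)]
    rw [count_listOf_total hP]
  · -- i < 2n
    set t := i / 2 with hts
    have htn : t < n := by omega
    have hc := counts_take (listOf S T) (length_listOf S T) t (by omega)
    rw [sW_listOf, tW_listOf] at hc
    have hbS := filter_lt_card_le S t
    have hbT := filter_lt_card_le T t
    have hw := hpre' hP2 t
    rcases (show i = 2 * t ∨ i = 2 * t + 1 by omega) with hi2 | hi2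
    · rw [hi2]
      omega
    · 
      rw [hi2, List.take_succ, List.getElem?_eq_getElem (by rw [length_listOf]; omega)]
      simp only [Option.toList_some, List.count_append]
      have hgetm : (listOf S T)[2 * t]'(by rw [length_listOf]; omega)
          = gOf S T ⟨2 * t, by omega⟩ := by
        simp [listOf, List.getElem_ofFn]
      rw [hgetm, gOf]
      rw [if_pos (show ((⟨2 * t, by omega⟩ : Fin (2*n)).val % 2 = 0) by
        show (2 * t) % 2 = 0; omega)]
      rw [show (⟨(⟨2 * t, by omega⟩ : Fin (2*n)).val / 2, by omega⟩ : Fin n)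
          = ⟨t, htn⟩ from Fin.ext (show (2 * t) / 2 = t by omega)]
      by_cases hmem : (⟨t, htn⟩ : Fin n) ∈ T
      · rw [if_pos hmem]
        have hstep := hP2 t
        rw [filter_le_eq_filter_lt_succ] at hstep
        rw [filter_lt_succ_card T htn, if_pos hmem] at hstep
        simp only [List.count_cons, List.count_nil]
        simp
        omega
      · rw [if_neg hmem]
        simp only [List.count_cons, List.count_nil]
        simp
        omega

noncomputable def dyckOf : DyckWord :=
  ⟨listOf S T, count_listOf_total hP, fun i => count_listOf_prefix hP i⟩

lemma semilength_dyckOf : (dyckOf hP).semilength = n := by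
  have := (dyckOf hP).two_mul_semilength_eq_length
  rw [show (dyckOf hP).toList = listOf S T from rfl, length_listOf] at this
  omega

end ToDyck

section FromDyck
variable (p : DyckWord) (hp : p.semilength = n)

include hp in
lemma length_toList : p.toList.length = 2 * n := by
  have := p.two_mul_semilength_eq_length
  omega

include hp in
lemma pcond_fromDyck : PCond n (sW p.toList (length_toList p hp), tW p.toList (length_toList p hp)) := by
  set w := p.toList with hw
  have hl : w.length = 2 * n := length_toList p hp
  set S := sW w hl with hSdef
  set T := tW w hl with hTdef
  have hcn := counts_take w hl n le_rfl
  rw [List.take_of_length_le (by omega)] at hcn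
  have hSn : (S.filter (fun s => s.val < n)).card = S.card := by
    rw [filter_lt_eq_self S le_rfl]
  have hTn : (T.filter (fun s => s.val < n)).card = T.card := by
    rw [filter_lt_eq_self T le_rfl]
  rw [hSn, hTn] at hcn
  have h2 : S.card ≤ n := by
    rw [← filter_lt_eq_self S (le_refl n)]; exact filter_lt_card_le S n
  have h3 : T.card ≤ n := by
    rw [← filter_lt_eq_self T (le_refl n)]; exact filter_lt_card_le T n
  have htot := p.count_U_eq_count_D
  rw [← hw] at htot
  have hcard : S.card = T.card := by omega
  refine ⟨hcard, ?_⟩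
  show ∀ t : ℕ, ((T.filter (fun s => s.val ≤ t)).card ≤ (S.filter (fun s => s.val < t)).card)
  intro t
  rcases le_or_gt n t with ht | ht
  · have hTt : T.filter (fun s => s.val ≤ t) = T :=
      Finset.filter_true_of_mem (fun x _ => by have := x.isLt; omega)
    have hSt : S.filter (fun s => s.val < t) = S :=
      filter_lt_eq_self S (by omega)
    rw [hTt, hSt]
    omega
  · have hct := counts_take w hl t (by omega)
    rw [← hSdef, ← hTdef] at hct
    have hbS := filter_lt_card_le S t
    have hbT := filter_lt_card_le T t
    have hpref := p.count_D_le_count_U (2 * t + 1)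
    rw [← hw] at hpref
    rw [List.take_succ, List.getElem?_eq_getElem (by omega)] at hpref
    simp only [Option.toList_some, List.count_append] at hpref
    rw [filter_le_eq_filter_lt_succ, filter_lt_succ_card T ht]
    by_cases hmem : (⟨t, ht⟩ : Fin n) ∈ T
    · rw [if_pos hmem]
      have hgm : w[2 * t]'(by omega) = D := by
        have : (⟨t, ht⟩ : Fin n) ∈ tW w hl := hmem
        simp only [tW, Finset.mem_filter, Finset.mem_univ, true_and, List.get_eq_getElem] at this
        exact this
      rw [hgm] at hpref
      simp only [List.count_cons, List.count_nil] at hpref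
      simp at hpref
      omega
    · rw [if_neg hmem]
      have hgm : w[2 * t]'(by omega) = U := by
        rcases DyckStep.dichotomy (w[2 * t]'(by omega)) with h | h
        · exact h
        · exfalso
          apply hmem
          rw [hTdef]
          simp only [tW, Finset.mem_filter, Finset.mem_univ, true_and, List.get_eq_getElem]
          exact h
      rw [hgm] at hpref
      simp only [List.count_cons, List.count_nil] at hpref
      simp at hpref
      omega

end FromDyck

noncomputable def equiv2 (n : ℕ) : {ST : Finset (Fin n) × Finset (Fin n) // PCond n ST}
    ≃ {p : DyckWord // p.semilength = n} where
  toFun := fun ST => ⟨dyckOf (S := ST.1.1) (T := ST.1.2) (by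
      obtain ⟨⟨S, T⟩, h⟩ := ST; exact h),
    semilength_dyckOf _⟩
  invFun := fun p => ⟨(sW p.1.toList (length_toList p.1 p.2), tW p.1.toList (length_toList p.1 p.2)),
    pcond_fromDyck p.1 p.2⟩
  left_inv := fun ST => by
    obtain ⟨⟨S, T⟩, h⟩ := ST
    apply Subtype.ext
    have h1 := sW_listOf S T
    have h2 := tW_listOf S T
    exact Prod.ext h1 h2
  right_inv := fun p => by
    apply Subtype.ext
    apply DyckWord.ext
    exact listOf_sW_tW p.1.toList (length_toList p.1 p.2)

end Stmt12

theorem stmt_12 (n : ℕ) (hn : 1 ≤ n) :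
    Nat.card {c : Fin n → ℕ //
        (∀ i : Fin n, c i ≤ n - (i.val + 1)) ∧
        ∀ i j : Fin n, i < j → c i ≠ 0 → c j ≠ 0 →
          (∀ k : Fin n, i < k → k < j → c k = 0) →
          c i - c j ≤ j.val - i.val - 1} = catalan n := by
  have e : {c : Fin n → ℕ // Stmt12.Cond n c} ≃ {p : DyckWord // p.semilength = n} :=
    (Stmt12.equiv1 n).trans (Stmt12.equiv2 n)
  calc Nat.card {c : Fin n → ℕ //
        (∀ i : Fin n, c i ≤ n - (i.val + 1)) ∧
        ∀ i j : Fin n, i < j → c i ≠ 0 → c j ≠ 0 →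
          (∀ k : Fin n, i < k → k < j → c k = 0) →
          c i - c j ≤ j.val - i.val - 1}
      = Nat.card {p : DyckWord // p.semilength = n} := Nat.card_congr e
    _ = Fintype.card {p : DyckWord // p.semilength = n} := Nat.card_eq_fintype_card
    _ = catalan n := DyckWord.card_dyckWord_semilength_eq_catalan n
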